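/- Let B = ⟨a, t ∣ t⁻¹a²t = a³⟩ be the Baumslag–Solitar group BS(2,3). Then the subgroup F of B generated by the two elements t and [a, t⁻¹at] is a free group of rank 2, freely generated by t and [a, t⁻¹at]. -/

import Mathlib

/-- The generator `a` of the Baumslag–Solitar group `BS(2,3)`,
as an element of the free group on `Bool` (`true ↦ a`, `false ↦ t`). -/
def bsA : FreeGroup Bool := FreeGroup.of true

/-- The generator `t` of the Baumslag–Solitar group `BS(2,3)`. -/
def bsT : FreeGroup Bool := FreeGroup.of false

/-- The single relator `t⁻¹ a² t a⁻³` of `BS(2,3)`. -/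
def bsRels : Set (FreeGroup Bool) := {bsT⁻¹ * bsA ^ 2 * bsT * bsA ^ (-3 : ℤ)}

/-- The Baumslag–Solitar group `BS(2,3) = ⟨a, t ∣ t⁻¹a²t = a³⟩`. -/
abbrev BS23 : Type := PresentedGroup bsRels

/-- The image of the generator `a` in `BS(2,3)`. -/
def aB : BS23 := PresentedGroup.of true

/-- The image of the generator `t` in `BS(2,3)`. -/
def tB : BS23 := PresentedGroup.of false

/-- The commutator with the convention `[x, y] := x⁻¹y⁻¹xy`. -/
def pcomm {G : Type*} [Group G] (x y : G) : G := x⁻¹ * y⁻¹ * x * y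

/-- The element `c := [a, t⁻¹at]` of `BS(2,3)`. -/
def cB : BS23 := pcomm aB (tB⁻¹ * aB * tB)

/-- The subgroup `F = ⟨t, [a, t⁻¹at]⟩` of `BS(2,3)`. -/
def Fsub : Subgroup BS23 := Subgroup.closure {tB, cB}

/-! ### Auxiliary development: an HNN extension model of `BS(2,3)`. -/

namespace BSAux

open Multiplicative

/-- The subgroup `dℤ` of `Multiplicative ℤ`. -/
def subd (d : ℤ) : Subgroup (Multiplicative ℤ) where
  carrier := {x | d ∣ x.toAdd}
  one_mem' := dvd_zero d
  mul_mem' := fun h1 h2 => dvd_add h1 h2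
  inv_mem' := fun h => dvd_neg.2 h

lemma mem_subd {d : ℤ} {x : Multiplicative ℤ} : x ∈ subd d ↔ d ∣ x.toAdd := Iff.rfl

/-- The isomorphism `3ℤ ≃ 2ℤ`, `3n ↦ 2n`. -/
def φ23 : subd 3 ≃* subd 2 where
  toFun x := ⟨ofAdd (2 * (x.1.toAdd / 3)), dvd_mul_right 2 _⟩
  invFun y := ⟨ofAdd (3 * (y.1.toAdd / 2)), dvd_mul_right 3 _⟩
  left_inv x := by
    obtain ⟨m, hm⟩ := x.2
    refine Subtype.ext ?_
    have : (3 : ℤ) * (2 * (x.1.toAdd / 3) / 2) = x.1.toAdd := by omega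
    simp only [toAdd_ofAdd, this]
    exact ofAdd_toAdd x.1
  right_inv y := by
    obtain ⟨m, hm⟩ := y.2
    refine Subtype.ext ?_
    have : (2 : ℤ) * (3 * (y.1.toAdd / 2) / 3) = y.1.toAdd := by omega
    simp only [toAdd_ofAdd, this]
    exact ofAdd_toAdd y.1
  map_mul' x y := by
    obtain ⟨m, hm⟩ := x.2
    obtain ⟨n, hn⟩ := y.2
    refine Subtype.ext ?_
    show ofAdd (2 * ((x.1 * y.1).toAdd / 3)) = ofAdd (2 * (x.1.toAdd / 3)) * ofAdd (2 * (y.1.toAdd / 3))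
    rw [← ofAdd_add]
    congr 1
    have : (x.1 * y.1).toAdd = x.1.toAdd + y.1.toAdd := rfl
    rw [this]
    omega

/-- The HNN extension `⟨ℤ, t | t (3ℤ) t⁻¹ = 2ℤ⟩ ≅ BS(2,3)`. -/
abbrev H : Type := HNNExtension (Multiplicative ℤ) (subd 3) (subd 2) φ23

/-- The image of `n ∈ ℤ` in `H`. -/
def g (n : ℤ) : H := HNNExtension.of (ofAdd n)

/-- The stable letter of `H`. -/
def τ : H := HNNExtension.t

lemma g_add (m n : ℤ) : g m * g n = g (m + n) := by
  rw [g, g, g, ← map_mul, ← ofAdd_add]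

lemma g_zero : g 0 = 1 := by
  rw [g]; exact map_one _

lemma g_inv (n : ℤ) : (g n)⁻¹ = g (-n) := by
  rw [eq_comm, eq_inv_iff_mul_eq_one, g_add, neg_add_cancel, g_zero]

lemma key_rel : τ * g 3 = g 2 * τ := by
  have h := HNNExtension.t_mul_of (φ := φ23) ⟨ofAdd 3, by exact ⟨1, by norm_num⟩⟩
  have hφ : (φ23 ⟨ofAdd 3, ⟨1, by norm_num⟩⟩ : Multiplicative ℤ) = ofAdd 2 := by
    show ofAdd (2 * ((ofAdd (3:ℤ)).toAdd / 3)) = ofAdd 2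
    norm_num
  rw [hφ] at h
  exact h

lemma key_rel' : τ⁻¹ * g 2 * τ = g 3 := by
  rw [mul_assoc, ← key_rel]; group

/-- The homomorphism `BS23 →* H`, `a ↦ g 1`, `t ↦ τ`. -/
def ψ : BS23 →* H :=
  PresentedGroup.toGroup (f := fun b : Bool => if b then g 1 else τ) (by
    rintro r hr
    rcases hr with rfl
    have hA : FreeGroup.lift (fun b : Bool => if b then g 1 else τ) bsA = g 1 :=
      FreeGroup.lift_apply_of
    have hT : FreeGroup.lift (fun b : Bool => if b then g 1 else τ) bsT = τ :=
      FreeGroup.lift_apply_of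
    simp only [map_mul, map_inv, map_zpow, map_pow, hA, hT]
    have h2 : g 1 ^ 2 = g 2 := by rw [pow_two, g_add]; norm_num
    have h3 : g 1 ^ (-3 : ℤ) = g (-3) := by
      have h3' : g 1 ^ (3 : ℕ) = g 3 := by
        rw [pow_succ, pow_two, g_add, g_add]; norm_num
      calc g 1 ^ (-3 : ℤ) = (g 1 ^ ((3 : ℕ) : ℤ))⁻¹ := by rw [← zpow_neg]; norm_num
        _ = g (-3) := by rw [zpow_natCast, h3', g_inv]
    rw [h2, h3, key_rel', g_add]
    norm_num
    exact g_zero)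

lemma ψ_t : ψ tB = τ := PresentedGroup.toGroup.of _

lemma ψ_a : ψ aB = g 1 := PresentedGroup.toGroup.of _

/-- The image of `c` in `H`. -/
def cH : H := ψ cB

/-- `z = c t⁻¹` in `H`. -/
def zH : H := cH * τ⁻¹

lemma cH_eq : cH = (g 1)⁻¹ * τ⁻¹ * (g 1)⁻¹ * τ * g 1 * τ⁻¹ * g 1 * τ := by
  rw [cH, cB, pcomm]
  simp only [map_mul, map_inv, ψ_a, ψ_t]
  group

lemma zH_eq : zH = g (-1) * (τ⁻¹ * g (-1)) * (τ * g 1) * (τ⁻¹ * g 1) := by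
  rw [zH, cH_eq, ← g_inv]
  group

/-! ### Encoding words in `t, z` as HNN reduced words. -/

/-- The head of the block of a letter. -/
def hd : Bool × Bool → ℤ
  | (true, _) => 0
  | (false, _) => -1

/-- The first `t`-exponent of the block of a letter. -/
def u₀ : Bool × Bool → ℤˣ
  | (true, true) => 1
  | (true, false) => -1
  | (false, true) => -1
  | (false, false) => 1

/-- The list part of the block of a letter, with `h` absorbed into the last entry. -/
def blkL : Bool × Bool → ℤ → List (ℤˣ × Multiplicative ℤ)
  | (true, true), h => [(1, ofAdd h)]
  | (true, false), h => [(-1, ofAdd h)]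
  | (false, true), h => [(-1, ofAdd (-1)), (1, ofAdd 1), (-1, ofAdd (1 + h))]
  | (false, false), h => [(1, ofAdd (-1)), (-1, ofAdd 1), (1, ofAdd (1 + h))]

/-- The list part of the encoding of the word `x :: xs`. -/
def FF : Bool × Bool → List (Bool × Bool) → List (ℤˣ × Multiplicative ℤ)
  | x, [] => blkL x 0
  | x, y :: ys => blkL x (hd y) ++ FF y ys

/-- Product of a list part in `H`. -/
def P (L : List (ℤˣ × Multiplicative ℤ)) : H :=
  (L.map fun p => (HNNExtension.t : H) ^ (p.1 : ℤ) * HNNExtension.of p.2).prod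

/-- The group element of a letter. -/
def blk : Bool × Bool → H
  | (true, true) => τ
  | (true, false) => τ⁻¹
  | (false, true) => zH
  | (false, false) => zH⁻¹

lemma of_eq_g (n : ℤ) : (HNNExtension.of (ofAdd n) :
    HNNExtension (Multiplicative ℤ) (subd 3) (subd 2) φ23) = g n := rfl

lemma t_eq_τ : (HNNExtension.t :
    HNNExtension (Multiplicative ℤ) (subd 3) (subd 2) φ23) = τ := rfl

lemma g_add' (m n : ℤ) (r : H) : g m * (g n * r) = g (m + n) * r := by
  rw [← mul_assoc, g_add]

lemma P_shift (x : Bool × Bool) (h : ℤ) : P (blkL x h) = P (blkL x 0) * g h := by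
  rcases x with ⟨b1, b2⟩
  cases b1 <;> cases b2 <;>
    simp only [blkL, P, List.map_cons, List.map_nil, List.prod_cons, List.prod_nil,
      t_eq_τ, Units.val_one, Units.val_neg, zpow_neg, zpow_one, of_eq_g, mul_one,
      mul_assoc, g_add', g_add, g_zero] <;>
    norm_num

lemma blk_eq (x : Bool × Bool) : g (hd x) * P (blkL x 0) = blk x := by
  have hz : zH = g (-1) * (τ⁻¹ * (g (-1) * (τ * (g 1 * (τ⁻¹ * g 1))))) := by
    rw [zH_eq]; group
  have hz' : zH⁻¹ = g (-1) * (τ * (g (-1) * (τ⁻¹ * (g 1 * (τ * g 1))))) := by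
    rw [hz]
    simp only [mul_inv_rev, g_inv, inv_inv, neg_neg, mul_assoc]
  rcases x with ⟨b1, b2⟩
  have hsimp : ∀ p : Bool × Bool, g (hd p) * P (blkL p 0) =
      g (hd p) * P (blkL p 0) := fun _ => rfl
  cases b1 <;> cases b2 <;>
    simp only [blkL, P, hd, blk, List.map_cons, List.map_nil, List.prod_cons, List.prod_nil,
      t_eq_τ, Units.val_one, Units.val_neg, zpow_neg, zpow_one, of_eq_g, mul_one,
      mul_assoc, g_zero, one_mul]
  · -- (false, false) : zH⁻¹
    rw [show (1 + 0 : ℤ) = 1 by norm_num]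
    exact hz'.symm
  · -- (false, true) : zH
    rw [show (1 + 0 : ℤ) = 1 by norm_num]
    exact hz.symm

lemma prod_FF : ∀ (xs : List (Bool × Bool)) (x : Bool × Bool),
    g (hd x) * P (FF x xs) = ((x :: xs).map blk).prod := by
  intro xs
  induction xs with
  | nil =>
    intro x
    simp only [FF, List.map_cons, List.map_nil, List.prod_cons, List.prod_nil, mul_one]
    exact blk_eq x
  | cons y ys ih =>
    intro x
    have hP : P (blkL x (hd y) ++ FF y ys) = P (blkL x (hd y)) * P (FF y ys) := by
      rw [P, List.map_append, List.prod_append]; rfl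
    rw [FF, hP, P_shift, List.map_cons, List.prod_cons, ← blk_eq x]
    have := ih y
    rw [List.map_cons, List.prod_cons] at this ⊢
    rw [← this]
    group

/-- The chain condition of `HNNExtension.NormalWord.ReducedWord`. -/
def rcond (a b : ℤˣ × Multiplicative ℤ) : Prop :=
  a.2 ∈ HNNExtension.toSubgroup (subd 3) (subd 2) a.1 → a.1 = b.1

lemma mem_toSubgroup_one {x : Multiplicative ℤ} :
    x ∈ HNNExtension.toSubgroup (subd 3) (subd 2) (1 : ℤˣ) ↔ (3) ∣ x.toAdd := Iff.rfl

lemma mem_toSubgroup_neg_one {x : Multiplicative ℤ} :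
    x ∈ HNNExtension.toSubgroup (subd 3) (subd 2) (-1 : ℤˣ) ↔ (2) ∣ x.toAdd := Iff.rfl

lemma head_FF : ∀ (xs : List (Bool × Bool)) (x : Bool × Bool),
    (FF x xs).head?.map Prod.fst = some (u₀ x) := by
  intro xs x
  cases xs with
  | nil => rcases x with ⟨_ | _, _ | _⟩ <;> rfl
  | cons y ys => rcases x with ⟨_ | _, _ | _⟩ <;> rfl

lemma FF_ne_nil : ∀ (xs : List (Bool × Bool)) (x : Bool × Bool), FF x xs ≠ [] := by
  intro xs x
  cases xs with
  | nil => rcases x with ⟨_ | _, _ | _⟩ <;> simp [FF, blkL]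
  | cons y ys => rcases x with ⟨_ | _, _ | _⟩ <;> simp [FF, blkL]

lemma chain_FF : ∀ (xs : List (Bool × Bool)) (x : Bool × Bool),
    List.Chain' (fun a b => b ≠ (a.1, !a.2)) (x :: xs) →
    List.Chain' rcond (FF x xs) := by
  intro xs
  induction xs with
  | nil =>
    intro x _
    rcases x with ⟨_ | _, _ | _⟩ <;>
      simp only [FF, blkL, List.Chain', List.isChain_cons_cons, List.isChain_singleton, List.isChain_nil,
        and_true, true_and, rcond] <;>
      refine ⟨?_, ?_⟩ <;> intro hmem <;>
      first
        | rfl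
        | (exfalso; revert hmem;
           simp only [mem_toSubgroup_one, mem_toSubgroup_neg_one, toAdd_ofAdd]; decide)
  | cons y ys ih =>
    intro x hred
    rw [List.Chain', List.isChain_cons_cons] at hred
    obtain ⟨hxy, hred'⟩ := hred
    have hch := ih y hred'
    rw [FF, List.Chain', List.isChain_append]
    refine ⟨?_, hch, ?_⟩
    · -- Chain' within the block `blkL x (hd y)`
      rcases x with ⟨_ | _, _ | _⟩ <;>
        simp only [blkL, hd, List.Chain', List.isChain_cons_cons, List.isChain_singleton, List.isChain_nil,
          and_true, true_and, rcond] <;>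
        try trivial
      all_goals
        refine ⟨?_, ?_⟩ <;> intro hmem <;>
        first
          | rfl
          | (exfalso; revert hmem;
             simp only [mem_toSubgroup_one, mem_toSubgroup_neg_one, toAdd_ofAdd]; decide)
    · -- junction
      intro a ha b hb
      have hb1 : b.1 = u₀ y := by
        have := head_FF ys y
        rw [hb] at this
        simpa using this
      rcases x with ⟨xb, xsn⟩
      rcases y with ⟨yb, ysn⟩
      rcases xb with _ | _ <;> rcases xsn with _ | _ <;>
        rcases yb with _ | _ <;> rcases ysn with _ | _ <;>
        simp only [blkL, hd, List.getLast?_cons_cons, List.getLast?_singleton,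
          Option.mem_def, Option.some_inj] at ha <;>
        subst ha <;>
        (try (exact absurd rfl hxy)) <;>
        intro hmem <;>
        rw [hb1] <;>
        first
          | rfl
          | (exfalso; revert hmem;
             simp only [mem_toSubgroup_one, mem_toSubgroup_neg_one, toAdd_ofAdd]; decide)

/-- Reduced words have no adjacent cancelling pairs, as a `Chain'`. -/
lemma chain'_or_split {α : Type*} (l : List (α × Bool)) :
    l.Chain' (fun a b => b ≠ (a.1, !a.2)) ∨
      ∃ (L₂ L₃ : List (α × Bool)) (x : α) (b : Bool),
        l = L₂ ++ (x, b) :: (x, !b) :: L₃ := by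
  induction l with
  | nil => exact Or.inl List.isChain_nil
  | cons a l ih =>
    cases l with
    | nil => exact Or.inl (List.isChain_singleton a)
    | cons c l' =>
      rcases ih with hch | ⟨L₂, L₃, x, b, hsplit⟩
      · by_cases hac : c = (a.1, !a.2)
        · exact Or.inr ⟨[], l', a.1, a.2, by simp [hac]⟩
        · exact Or.inl (List.isChain_cons_cons.2 ⟨hac, hch⟩)
      · exact Or.inr ⟨a :: L₂, L₃, x, b, by rw [hsplit]; rfl⟩

lemma chain'_toWord (w : FreeGroup Bool) :
    w.toWord.Chain' (fun a b => b ≠ (a.1, !a.2)) := by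
  rcases chain'_or_split w.toWord with h | ⟨L₂, L₃, x, b, hsplit⟩
  · exact h
  · exfalso
    have := FreeGroup.reduce_toWord w
    rw [hsplit] at this
    exact FreeGroup.reduce.not this

/-- The key injectivity: `t` and `z = c t⁻¹` freely generate. -/
lemma Lmap_injective :
    Function.Injective (FreeGroup.lift (fun b : Bool => if b then τ else zH)) := by
  set Lmap := FreeGroup.lift (fun b : Bool => if b then τ else zH) with hLmap
  rw [injective_iff_map_eq_one]
  intro w hw
  by_contra hne
  have htw : w.toWord ≠ [] := fun h => hne (FreeGroup.toWord_eq_nil_iff.1 h)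
  obtain ⟨x, xs, hxxs⟩ : ∃ x xs, w.toWord = x :: xs := by
    cases h : w.toWord with
    | nil => exact absurd h htw
    | cons x xs => exact ⟨x, xs, rfl⟩
  have hch : List.Chain' (fun a b => b ≠ (a.1, !a.2)) (x :: xs) := by
    rw [← hxxs]; exact chain'_toWord w
  set R : HNNExtension.NormalWord.ReducedWord (Multiplicative ℤ) (subd 3) (subd 2) :=
    ⟨ofAdd (hd x), FF x xs, chain_FF xs x hch⟩ with hR
  have hblk : ∀ p : Bool × Bool, blk p = (if p.1 then τ else zH) ^ (if p.2 then 1 else -1 : ℤ) := by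
    rintro ⟨_ | _, _ | _⟩ <;> simp [blk] <;> rfl
  have hprod : R.prod φ23 = Lmap w := by
    have h1 : R.prod φ23 = g (hd x) * P (FF x xs) := rfl
    rw [h1, prod_FF]
    conv_rhs => rw [← FreeGroup.mk_toWord (x := w), hxxs]
    rw [hLmap, FreeGroup.lift_mk]
    congr 1
    apply List.map_congr_left
    intro p _
    rcases p with ⟨_ | _, _ | _⟩ <;> simp [blk] <;> rfl
  have hmem : R.prod φ23 ∈ (HNNExtension.of.range :
      Subgroup (HNNExtension (Multiplicative ℤ) (subd 3) (subd 2) φ23)) := by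
    rw [hprod, hw]
    exact ⟨1, map_one _⟩
  have := HNNExtension.ReducedWord.toList_eq_nil_of_mem_of_range φ23 R hmem
  exact FF_ne_nil xs x this

end BSAux

open BSAux in
/-- The subgroup `F = ⟨t, [a, t⁻¹at]⟩` of `BS(2,3)` is free of rank 2, freely
generated by `t` and `[a, t⁻¹at]`: the homomorphism from the free group on two
generators sending them to `t` and `[a, t⁻¹at]` is injective with range `F`. -/
theorem F_free_of_rank_two :
    Function.Injective (FreeGroup.lift (fun b : Bool => if b then tB else cB)) ∧
    (FreeGroup.lift (fun b : Bool => if b then tB else cB)).range = Fsub := by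
  constructor
  · -- injectivity
    set α : FreeGroup Bool →* FreeGroup Bool :=
      FreeGroup.lift (fun b : Bool => if b then FreeGroup.of true
        else FreeGroup.of false * FreeGroup.of true) with hα
    set β : FreeGroup Bool →* FreeGroup Bool :=
      FreeGroup.lift (fun b : Bool => if b then FreeGroup.of true
        else FreeGroup.of false * (FreeGroup.of true)⁻¹) with hβ
    have hβα : ∀ w, β (α w) = w := by
      intro w
      have : β.comp α = MonoidHom.id _ := by
        apply FreeGroup.ext_hom
        intro b
        cases b <;> simp [hα, hβ]
      calc β (α w) = (β.comp α) w := rfl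
        _ = w := by rw [this]; rfl
    have hαinj : Function.Injective α := Function.LeftInverse.injective hβα
    set Lmap := FreeGroup.lift (fun b : Bool => if b then τ else zH) with hLmap
    have hcomp : (ψ.comp (FreeGroup.lift (fun b : Bool => if b then tB else cB))) =
        Lmap.comp α := by
      apply FreeGroup.ext_hom
      intro b
      cases b <;>
        simp only [MonoidHom.comp_apply, FreeGroup.lift_apply_of, hα, hLmap, if_true, if_false,
          map_mul, map_inv]
      · show ψ cB = zH * τ
        rw [zH, cH]
        group
      · exact ψ_t
    intro u v huv
    have : (Lmap.comp α) u = (Lmap.comp α) v := by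
      rw [← hcomp]
      simp only [MonoidHom.comp_apply, huv]
    exact hαinj (Lmap_injective this)
  · -- range
    rw [FreeGroup.range_lift_eq_closure, Fsub]
    congr 1
    ext z
    simp only [Set.mem_range, Set.mem_insert_iff, Set.mem_singleton_iff]
    constructor
    · rintro ⟨b, rfl⟩
      cases b
      · exact Or.inr rfl
      · exact Or.inl rfl
    · rintro (rfl | rfl)
      · exact ⟨true, rfl⟩
      · exact ⟨false, rfl⟩
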